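/- Let h : [0,∞) → [0,∞) be a nondecreasing convex C¹ function with h(0) > 0, γ > 0 and c := sup_{p ∈ (0,1)} γ·p·h(−ln(p)/γ) < ∞ (equivalently sup_{y>0} e^{−γy} h(y) < ∞). Define p₀ = inf{ p ≥ 1 : γ·p·h(ln(p)/γ) ≥ c } and H(p) = γ·p·h(ln(p)/γ) for p ≥ p₀ and H(p) = c for p < p₀. Then H is convex on ℝ. -/

import Mathlib

open Real Set

theorem H_convex_superlinear (h : ℝ → ℝ) (γ : ℝ) (hγ : 0 < γ)
    (hmono : MonotoneOn h (Ici 0)) (hconv : ConvexOn ℝ (Ici 0) h)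
    (hsmooth : ContDiffOn ℝ 1 h (Ici 0)) (h0 : 0 < h 0)
    (hnonneg : ∀ y ∈ Ici (0 : ℝ), 0 ≤ h y)
    (hnotconst : ¬ ∀ y ∈ Ici (0 : ℝ), h y = h 0)
    (hbdd : ∃ C : ℝ, ∀ y > (0 : ℝ), Real.exp (-γ * y) * h y ≤ C)
    (c : ℝ) (hc : c = sSup {x : ℝ | ∃ p ∈ Ioo (0 : ℝ) 1, x = γ * p * h (-Real.log p / γ)})
    (p₀ : ℝ) (hp₀ : p₀ = sInf {p : ℝ | 1 ≤ p ∧ c ≤ γ * p * h (Real.log p / γ)}) :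
    ConvexOn ℝ Set.univ
      (fun p : ℝ => if p₀ ≤ p then γ * p * h (Real.log p / γ) else c) := by
  set g : ℝ → ℝ := fun p => γ * p * h (Real.log p / γ) with hgdef
  have hkey : ∀ p : ℝ, 1 ≤ p → Real.log p / γ ∈ Ici (0:ℝ) := fun p hp =>
    div_nonneg (Real.log_nonneg hp) hγ.le
  obtain ⟨C, hC⟩ := hbdd
  -- upper bounds for the sup set
  have hS1bdd : BddAbove {x : ℝ | ∃ p ∈ Ioo (0 : ℝ) 1, x = γ * p * h (-Real.log p / γ)} := by
    refine ⟨γ * C, ?_⟩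
    rintro x ⟨p, ⟨hp0, hp1⟩, rfl⟩
    have hy : 0 < -Real.log p / γ :=
      div_pos (neg_pos.mpr (Real.log_neg hp0 hp1)) hγ
    have hexp : Real.exp (-γ * (-Real.log p / γ)) = p := by
      rw [show -γ * (-Real.log p / γ) = Real.log p by field_simp]
      exact Real.exp_log hp0
    have := hC _ hy
    rw [hexp] at this
    calc γ * p * h (-Real.log p / γ) = γ * (p * h (-Real.log p / γ)) := by ring
      _ ≤ γ * C := by
          exact mul_le_mul_of_nonneg_left this hγ.le
  have hS1ne : {x : ℝ | ∃ p ∈ Ioo (0 : ℝ) 1, x = γ * p * h (-Real.log p / γ)}.Nonempty :=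
    ⟨_, (1:ℝ)/2, by norm_num, rfl⟩
  have hmemc : ∀ p ∈ Ioo (0:ℝ) 1, γ * p * h (-Real.log p / γ) ≤ c := by
    intro p hp
    rw [hc]; exact le_csSup hS1bdd ⟨p, hp, rfl⟩
  -- c ≥ γ * h 0
  have hch0 : γ * h 0 ≤ c := by
    have htend : Filter.Tendsto (fun p : ℝ => γ * p * h 0) (nhdsWithin 1 (Iio 1)) (nhds (γ * h 0)) := by
      have : Filter.Tendsto (fun p : ℝ => γ * p * h 0) (nhds 1) (nhds (γ * 1 * h 0)) := by
        apply Continuous.tendsto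
        continuity
      rw [mul_one] at this
      exact this.mono_left nhdsWithin_le_nhds
    refine le_of_tendsto htend ?_
    filter_upwards [Ioo_mem_nhdsLT one_pos] with p hp
    have hle : h 0 ≤ h (-Real.log p / γ) := by
      have hy : 0 < -Real.log p / γ :=
        div_pos (neg_pos.mpr (Real.log_neg hp.1 hp.2)) hγ
      exact hmono self_mem_Ici hy.le hy.le
    calc γ * p * h 0 ≤ γ * p * h (-Real.log p / γ) := by
          exact mul_le_mul_of_nonneg_left hle (mul_nonneg hγ.le hp.1.le)
      _ ≤ c := hmemc p hp
  -- the set defining p₀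
  set S : Set ℝ := {p : ℝ | 1 ≤ p ∧ c ≤ γ * p * h (Real.log p / γ)} with hSdef
  have hcpos : 0 < c := lt_of_lt_of_le (by positivity) hch0
  have hSne : S.Nonempty := by
    refine ⟨max 1 (c / (γ * h 0)), le_max_left _ _, ?_⟩
    set p := max 1 (c / (γ * h 0)) with hpdef
    have hp1 : 1 ≤ p := le_max_left _ _
    have hle : h 0 ≤ h (Real.log p / γ) := hmono self_mem_Ici (hkey p hp1) (hkey p hp1)
    have h1 : c ≤ γ * p * h 0 := by
      have : c / (γ * h 0) ≤ p := le_max_right _ _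
      calc c = (c / (γ * h 0)) * (γ * h 0) := by field_simp
        _ ≤ p * (γ * h 0) := by
            exact mul_le_mul_of_nonneg_right this (by positivity)
        _ = γ * p * h 0 := by ring
    exact h1.trans (mul_le_mul_of_nonneg_left hle (by positivity))
  have hSbdd : BddBelow S := ⟨1, fun p hp => hp.1⟩
  have hp₀1 : 1 ≤ p₀ := by rw [hp₀]; exact le_csInf hSne fun p hp => hp.1
  -- continuity of g on Ici 1
  have hgcont : ContinuousOn g (Ici 1) := by
    have hlog : ContinuousOn (fun p : ℝ => Real.log p / γ) (Ici 1) := by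
      apply ContinuousOn.div_const
      exact Real.continuousOn_log.mono (fun p hp => by
        simp only [mem_compl_iff, mem_singleton_iff]
        intro hp0
        rw [hp0] at hp
        exact absurd hp (by norm_num))
    exact ((continuous_const.mul continuous_id).continuousOn).mul
      ((hsmooth.continuousOn.comp hlog) (fun p hp => hkey p hp))
  -- c ≤ g p₀
  have hclegp₀ : c ≤ g p₀ := by
    have hmemcl : p₀ ∈ closure S := by rw [hp₀]; exact csInf_mem_closure hSne hSbdd
    have hcw : ContinuousWithinAt g S p₀ := (hgcont p₀ hp₀1).mono (fun p hp => hp.1)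
    have : g p₀ ∈ closure (Ici c) := hcw.mem_closure hmemcl (fun p hp => hp.2)
    rwa [isClosed_Ici.closure_eq] at this
  -- g p₀ ≤ c
  have hgp₀lec : g p₀ ≤ c := by
    rcases eq_or_lt_of_le hp₀1 with heq | hlt
    · have : g p₀ = γ * h 0 := by
        rw [← heq]; simp [hgdef, Real.log_one]
      rw [this]; exact hch0
    · have hmemcl : p₀ ∈ closure (Ico 1 p₀) := by
        rw [closure_Ico (by linarith : (1:ℝ) ≠ p₀)]
        exact ⟨hp₀1, le_refl _⟩
      have hcw : ContinuousWithinAt g (Ico 1 p₀) p₀ := (hgcont p₀ hp₀1).mono (fun p hp => hp.1)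
      have hmt : MapsTo g (Ico 1 p₀) (Iic c) := by
        intro p hp
        by_contra hcon
        simp only [mem_Iic, not_le] at hcon
        have : p₀ ≤ p := by rw [hp₀]; exact csInf_le hSbdd ⟨hp.1, hcon.le⟩
        exact absurd hp.2 (not_lt.mpr this)
      have := hcw.mem_closure hmemcl hmt
      rwa [isClosed_Iic.closure_eq] at this
  have hgp₀ : g p₀ = c := le_antisymm hgp₀lec hclegp₀
  -- monotonicity of g on Ici 1
  have hgmono : MonotoneOn g (Ici 1) := by
    intro p hp q hq hpq
    have hlog : Real.log p / γ ≤ Real.log q / γ := by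
      gcongr
      exact lt_of_lt_of_le one_pos hp
    exact mul_le_mul (mul_le_mul_of_nonneg_left hpq hγ.le)
      (hmono (hkey p hp) (hkey q hq) hlog)
      (hnonneg _ (hkey p hp)) (mul_nonneg hγ.le (zero_le_one.trans hq))
  have hgec : ∀ p, p₀ ≤ p → c ≤ g p := by
    intro p hp
    rw [← hgp₀]
    exact hgmono hp₀1 (hp₀1.trans hp) hp
  -- differentiability of h at interior points
  have hhd : ∀ y : ℝ, 0 < y → DifferentiableAt ℝ h y := fun y hy =>
    (hsmooth.contDiffAt (Ici_mem_nhds hy)).differentiableAt one_ne_zero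
  -- derivative of g
  have hgderiv : ∀ p : ℝ, 1 < p →
      HasDerivAt g (γ * h (Real.log p / γ) + deriv h (Real.log p / γ)) p := by
    intro p hp
    have hp0 : (0:ℝ) < p := lt_trans one_pos hp
    have hy : 0 < Real.log p / γ := div_pos (Real.log_pos hp) hγ
    have hinner : HasDerivAt (fun q : ℝ => Real.log q / γ) (p⁻¹ / γ) p :=
      (Real.hasDerivAt_log hp0.ne').div_const γ
    have hcomp : HasDerivAt (fun q : ℝ => h (Real.log q / γ))
        (deriv h (Real.log p / γ) * (p⁻¹ / γ)) p :=
      (hhd _ hy).hasDerivAt.comp p hinner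
    have hlin : HasDerivAt (fun q : ℝ => γ * q) γ p := by
      simpa using (hasDerivAt_id p).const_mul γ
    have hval : γ * h (Real.log p / γ) + deriv h (Real.log p / γ) =
        γ * h (Real.log p / γ) + (γ * p) * (deriv h (Real.log p / γ) * (p⁻¹ / γ)) := by
      field_simp
    rw [hval]
    exact hlin.mul hcomp
  -- convexity of g on Ici p₀
  have hdconv : ConvexOn ℝ (Ici p₀) g := by
    apply MonotoneOn.convexOn_of_deriv (convex_Ici p₀)
      (hgcont.mono (Ici_subset_Ici.mpr hp₀1))
    · rw [interior_Ici]
      intro p hp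
      have : 1 < p := lt_of_le_of_lt hp₀1 hp
      exact ((hgderiv p this).differentiableAt).differentiableWithinAt
    · rw [interior_Ici]
      have hdm : MonotoneOn (deriv h) (Ioi 0) :=
        ConvexOn.monotoneOn_deriv (hconv.subset Ioi_subset_Ici_self (convex_Ioi 0))
          (fun y hy => hhd y hy)
      intro p hp q hq hpq
      have hp1 : 1 < p := lt_of_le_of_lt hp₀1 hp
      have hq1 : 1 < q := lt_of_le_of_lt hp₀1 hq
      rw [(hgderiv p hp1).deriv, (hgderiv q hq1).deriv]
      have hyp : 0 < Real.log p / γ := div_pos (Real.log_pos hp1) hγ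
      have hyq : 0 < Real.log q / γ := div_pos (Real.log_pos hq1) hγ
      have hlog : Real.log p / γ ≤ Real.log q / γ := by
        gcongr
      exact add_le_add
        (mul_le_mul_of_nonneg_left (hmono hyp.le hyq.le hlog) hγ.le)
        (hdm hyp hyq hlog)
  -- final assembly
  apply convexOn_of_slope_mono_adjacent convex_univ
  intro x y z _ _ hxy hyz
  show ((if p₀ ≤ y then g y else c) - (if p₀ ≤ x then g x else c)) / (y - x) ≤
      ((if p₀ ≤ z then g z else c) - (if p₀ ≤ y then g y else c)) / (z - y)
  by_cases hx : p₀ ≤ x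
  · have hy' : p₀ ≤ y := hx.trans hxy.le
    have hz' : p₀ ≤ z := hy'.trans hyz.le
    rw [if_pos hx, if_pos hy', if_pos hz']
    exact hdconv.slope_mono_adjacent hx hz' hxy hyz
  · push_neg at hx
    rw [if_neg (not_le.mpr hx)]
    by_cases hz' : p₀ ≤ z
    · by_cases hy' : p₀ ≤ y
      · rw [if_pos hy', if_pos hz']
        rcases eq_or_lt_of_le hy' with heq | hlt
        · rw [← heq, hgp₀]
          simp only [sub_self, zero_div]
          exact div_nonneg (by linarith [hgec z hz']) (by linarith [heq ▸ hyz])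
        · have h1 : (g y - c) / (y - x) ≤ (g y - c) / (y - p₀) :=
            div_le_div_of_nonneg_left (sub_nonneg.mpr (hgec y hy'))
              (by linarith) (by linarith)
          refine h1.trans ?_
          have h2 := hdconv.slope_mono_adjacent (self_mem_Ici) hz' hlt hyz
          rwa [hgp₀] at h2
      · rw [if_neg hy', if_pos hz']
        simp only [sub_self, zero_div]
        exact div_nonneg (sub_nonneg.mpr (hgec z hz')) (by linarith)
    · have hy'' : ¬ p₀ ≤ y := fun hcon => hz' (hcon.trans hyz.le)
      rw [if_neg hy'', if_neg hz']
      simp
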